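/- The 3-dimensional hypercube graph Q_3 (on 8 vertices) contains a perfect matching M of size 4 such that every induced matching M' ⊆ M has |M'| ≤ 1. Consequently, the multitasking capacity α of Q_3 satisfies α ≤ 1/4. -/
import Mathlib


/-- `M` is a matching in `G`: a set of edges of `G` that are pairwise vertex-disjoint. -/
def IsMatchingSet {V : Type*} (G : SimpleGraph V) (M : Finset (Sym2 V)) : Prop :=
  (↑M ⊆ G.edgeSet) ∧ ∀ e ∈ M, ∀ f ∈ M, e ≠ f → ∀ v : V, v ∈ e → v ∉ f

/-- `M` is an induced matching in `G`. -/
def IsInducedMatchingSet {V : Type*} (G : SimpleGraph V) (M : Finset (Sym2 V)) : Prop :=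
  IsMatchingSet G M ∧
    ∀ e ∈ M, ∀ f ∈ M, e ≠ f → ∀ u v : V, u ∈ e → v ∈ f → ¬ G.Adj u v

/-- The 3-dimensional hypercube `Q₃`: vertices are `{0,1}³`, adjacent iff they differ in
exactly one coordinate. -/
def Q3 : SimpleGraph (Fin 3 → Bool) :=
  SimpleGraph.fromRel fun x y => (Finset.univ.filter fun i => x i ≠ y i).card = 1

instance : DecidableRel Q3.Adj := fun x y =>
  decidable_of_iff (x ≠ y ∧
    ((Finset.univ.filter fun i => x i ≠ y i).card = 1 ∨
     (Finset.univ.filter fun i => y i ≠ x i).card = 1)) Iff.rfl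

def Mhc : Finset (Sym2 (Fin 3 → Bool)) :=
  { s(![false,false,false], ![false,false,true]),
    s(![false,true,false], ![true,true,false]),
    s(![false,true,true], ![true,true,true]),
    s(![true,false,false], ![true,false,true]) }

lemma Mhc_matching : IsMatchingSet Q3 Mhc := by
  constructor
  · intro e he
    simp only [Finset.coe_insert, Set.mem_insert_iff, Finset.coe_singleton,
      Set.mem_singleton_iff, Mhc] at he
    rcases he with h | h | h | h <;> subst h <;> decide
  · decide

lemma Mhc_pairs : ∀ e ∈ Mhc, ∀ f ∈ Mhc, e ≠ f →
    ∃ u v : Fin 3 → Bool, u ∈ e ∧ v ∈ f ∧ Q3.Adj u v := by decide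

theorem stmt4 :
    (∃ M : Finset (Sym2 (Fin 3 → Bool)),
      IsMatchingSet Q3 M ∧ M.card = 4 ∧ (∀ v, ∃ e ∈ M, v ∈ e) ∧
      ∀ M' ⊆ M, IsInducedMatchingSet Q3 M' → M'.card ≤ 1) ∧
    ∀ α : ℝ,
      (∀ N, IsMatchingSet Q3 N →
        ∃ N' ⊆ N, IsInducedMatchingSet Q3 N' ∧ α * N.card ≤ (N'.card : ℝ)) →
      α ≤ 1 / 4 := by
  have key : ∀ M' ⊆ Mhc, IsInducedMatchingSet Q3 M' → M'.card ≤ 1 := by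
    intro M' hsub hind
    by_contra h
    push_neg at h
    obtain ⟨e, he, f, hf, hef⟩ := Finset.one_lt_card.mp h
    obtain ⟨u, v, hu, hv, hadj⟩ := Mhc_pairs e (hsub he) f (hsub hf) hef
    exact hind.2 e he f hf hef u v hu hv hadj
  refine ⟨⟨Mhc, Mhc_matching, by decide, by decide, key⟩, ?_⟩
  intro α hα
  obtain ⟨N', hsub, hind, hle⟩ := hα Mhc Mhc_matching
  have h1 : (N'.card : ℝ) ≤ 1 := by exact_mod_cast key N' hsub hind
  have h4 : (Mhc.card : ℝ) = 4 := by norm_num [show Mhc.card = 4 from by decide]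
  rw [h4] at hle
  linarith
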